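/- An inverse sequence of groups that is both semistable and pro-monomorphic is stable. That is, if an inverse sequence (Gₙ, gₙ) is pro-isomorphic to an inverse sequence all of whose bonding homomorphisms are surjective, and also pro-isomorphic to an inverse sequence all of whose bonding homomorphisms are injective, then (Gₙ, gₙ) is pro-isomorphic to a constant inverse sequence. -/
import Mathlib


universe u

/-- Given an inverse sequence of groups `(Gₙ, gₙ)` (with bonding homomorphisms
`gₙ : Gₙ₊₁ →* Gₙ`), the composite bonding homomorphism `Gₙ →* Gₘ` for `m ≤ n`,
i.e. `gₘ ∘ gₘ₊₁ ∘ ⋯ ∘ gₙ₋₁` (the identity when `m = n`). -/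
def bondingComp {G : ℕ → Type*} [∀ n, Group (G n)] (g : ∀ n, G (n + 1) →* G n)
    (m n : ℕ) (h : m ≤ n) : G n →* G m :=
  Nat.leRecOn h (fun {k} ih => ih.comp (g k)) (MonoidHom.id (G m))

/-- Two inverse sequences of groups are *pro-isomorphic* if there exist
strictly increasing `i j : ℕ → ℕ` and homomorphisms `dₖ : B (j k) →* A (i k)`
and `uₖ : A (i (k+1)) →* B (j k)` such that `dₖ ∘ uₖ` is the composite bonding
homomorphism `A (i (k+1)) →* A (i k)` and `uₖ ∘ dₖ₊₁` is the composite bonding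
homomorphism `B (j (k+1)) →* B (j k)`. -/
def ProIsomorphic (A : ℕ → Type*) [∀ n, Group (A n)] (a : ∀ n, A (n + 1) →* A n)
    (B : ℕ → Type*) [∀ n, Group (B n)] (b : ∀ n, B (n + 1) →* B n) : Prop :=
  ∃ (i j : ℕ → ℕ) (hi : StrictMono i) (hj : StrictMono j)
    (d : ∀ k, B (j k) →* A (i k)) (u : ∀ k, A (i (k + 1)) →* B (j k)),
    (∀ k, (d k).comp (u k) = bondingComp a (i k) (i (k + 1)) (hi (Nat.lt_succ_self k)).le) ∧
    (∀ k, (u k).comp (d (k + 1)) = bondingComp b (j k) (j (k + 1)) (hj (Nat.lt_succ_self k)).le)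

/-- An inverse sequence of groups is *semistable* if it is pro-isomorphic to an
inverse sequence all of whose bonding homomorphisms are surjective. -/
def Semistable (G : ℕ → Type u) [∀ n, Group (G n)] (g : ∀ n, G (n + 1) →* G n) : Prop :=
  ∃ (B : ℕ → Type u) (instB : ∀ n, Group (B n)),
    letI := instB
    ∃ b : ∀ n, B (n + 1) →* B n,
      (∀ n, Function.Surjective (b n)) ∧ ProIsomorphic G g B b

/-- An inverse sequence of groups is *pro-monomorphic* if it is pro-isomorphic
to an inverse sequence all of whose bonding homomorphisms are injective. -/
def ProMonomorphic (G : ℕ → Type u) [∀ n, Group (G n)] (g : ∀ n, G (n + 1) →* G n) : Prop :=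
  ∃ (B : ℕ → Type u) (instB : ∀ n, Group (B n)),
    letI := instB
    ∃ b : ∀ n, B (n + 1) →* B n,
      (∀ n, Function.Injective (b n)) ∧ ProIsomorphic G g B b

/-- An inverse sequence of groups is *stable* if it is pro-isomorphic to a
constant inverse sequence `C ← C ← C ← ⋯` in which every bonding map is the
identity homomorphism of a fixed group `C`. -/
def Stable (G : ℕ → Type u) [∀ n, Group (G n)] (g : ∀ n, G (n + 1) →* G n) : Prop :=
  ∃ (C : Type u) (inst : Group C),
    letI := inst
    ProIsomorphic G g (fun _ => C) (fun _ => MonoidHom.id C)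

section Aux
variable {G : ℕ → Type*} [∀ n, Group (G n)] (g : ∀ n, G (n + 1) →* G n)

theorem bondingComp_self (m : ℕ) (h : m ≤ m) : bondingComp g m m h = MonoidHom.id (G m) :=
  Nat.leRecOn_self _

theorem bondingComp_succ (m n : ℕ) (h : m ≤ n) (h2 : m ≤ n + 1) :
    bondingComp g m (n + 1) h2 = (bondingComp g m n h).comp (g n) :=
  Nat.leRecOn_succ h _

theorem bondingComp_comp (m n p : ℕ) (h1 : m ≤ n) (h2 : n ≤ p) (h3 : m ≤ p) :
    (bondingComp g m n h1).comp (bondingComp g n p h2) = bondingComp g m p h3 := by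
  induction p, h2 using Nat.le_induction with
  | base => rw [bondingComp_self, MonoidHom.comp_id]
  | succ p hp ih =>
      rw [bondingComp_succ g n p hp, bondingComp_succ g m p (h1.trans hp),
        ← MonoidHom.comp_assoc, ih (h1.trans hp)]

theorem bondingComp_surjective (hs : ∀ n, Function.Surjective (g n)) (m n : ℕ) (h : m ≤ n) :
    Function.Surjective (bondingComp g m n h) := by
  induction n, h using Nat.le_induction with
  | base => rw [bondingComp_self]; exact Function.surjective_id
  | succ p hp ih =>
      rw [bondingComp_succ g m p hp, MonoidHom.coe_comp]
      exact ih.comp (hs p)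

theorem bondingComp_injective (hs : ∀ n, Function.Injective (g n)) (m n : ℕ) (h : m ≤ n) :
    Function.Injective (bondingComp g m n h) := by
  induction n, h using Nat.le_induction with
  | base => rw [bondingComp_self]; exact Function.injective_id
  | succ p hp ih =>
      rw [bondingComp_succ g m p hp, MonoidHom.coe_comp]
      exact ih.comp (hs p)

end Aux

theorem bondingComp_const_id (C : Type*) [Group C] (m n : ℕ) (h : m ≤ n) :
    bondingComp (G := fun _ => C) (fun _ => MonoidHom.id C) m n h = MonoidHom.id C := by
  induction n, h using Nat.le_induction with
  | base => exact Nat.leRecOn_self _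
  | succ p hp ih =>
      rw [bondingComp_succ _ m p hp, ih, MonoidHom.id_comp]


/-- Key interleaving lemma. -/
theorem key {A : ℕ → Type*} [∀ n, Group (A n)] {G : ℕ → Type*} [∀ n, Group (G n)]
    (a : ∀ n, A (n + 1) →* A n) (g : ∀ n, G (n + 1) →* G n)
    (i j : ℕ → ℕ) (hi : StrictMono i) (hj : StrictMono j)
    (d : ∀ k, G (j k) →* A (i k)) (u : ∀ k, A (i (k + 1)) →* G (j k))
    (hdu : ∀ k, (d k).comp (u k) = bondingComp a (i k) (i (k + 1)) (hi (Nat.lt_succ_self k)).le)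
    (hud : ∀ k, (u k).comp (d (k + 1)) = bondingComp g (j k) (j (k + 1)) (hj (Nat.lt_succ_self k)).le)
    (k k' : ℕ) (h : k ≤ k') :
    (d k).comp ((bondingComp g (j k) (j k') (hj.monotone h)).comp (u k')) =
      bondingComp a (i k) (i (k' + 1)) (hi.monotone (by omega)) := by
  induction k', h using Nat.le_induction with
  | base => rw [bondingComp_self, MonoidHom.id_comp]; exact hdu k
  | succ p hp ih =>
      have e1 : bondingComp g (j k) (j (p + 1)) (hj.monotone (hp.trans p.le_succ)) =
          ((bondingComp g (j k) (j p) (hj.monotone hp)).comp ((u p).comp (d (p + 1)))) := by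
        rw [hud p, bondingComp_comp]
      rw [e1]
      calc (d k).comp ((((bondingComp g (j k) (j p) (hj.monotone hp)).comp
              ((u p).comp (d (p + 1))))).comp (u (p + 1)))
          = ((d k).comp ((bondingComp g (j k) (j p) (hj.monotone hp)).comp (u p))).comp
              ((d (p + 1)).comp (u (p + 1))) := by
            simp only [MonoidHom.comp_assoc]
        _ = (bondingComp a (i k) (i (p + 1)) (hi.monotone (by omega))).comp
              (bondingComp a (i (p + 1)) (i (p + 2)) (hi (Nat.lt_succ_self (p+1))).le) := by
            rw [ih, hdu (p + 1)]
        _ = bondingComp a (i k) (i (p + 2)) (hi.monotone (by omega)) := by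
            rw [bondingComp_comp]

theorem proIso_symm {A : ℕ → Type*} [∀ n, Group (A n)] {a : ∀ n, A (n + 1) →* A n}
    {B : ℕ → Type*} [∀ n, Group (B n)] {b : ∀ n, B (n + 1) →* B n}
    (h : ProIsomorphic A a B b) : ProIsomorphic B b A a := by
  obtain ⟨i, j, hi, hj, d, u, hdu, hud⟩ := h
  exact ⟨j, fun k => i (k + 1), hj, fun _ _ hkl => hi (by omega), u, fun k => d (k + 1),
    hud, fun k => hdu (k + 1)⟩

/-- Dual key lemma. -/
theorem key2 {B : ℕ → Type*} [∀ n, Group (B n)] {G : ℕ → Type*} [∀ n, Group (G n)]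
    (b : ∀ n, B (n + 1) →* B n) (g : ∀ n, G (n + 1) →* G n)
    (p q : ℕ → ℕ) (hp : StrictMono p) (hq : StrictMono q)
    (e : ∀ k, B (q k) →* G (p k)) (v : ∀ k, G (p (k + 1)) →* B (q k))
    (hev : ∀ k, (e k).comp (v k) = bondingComp g (p k) (p (k + 1)) (hp (Nat.lt_succ_self k)).le)
    (hve : ∀ k, (v k).comp (e (k + 1)) = bondingComp b (q k) (q (k + 1)) (hq (Nat.lt_succ_self k)).le)
    (m m' : ℕ) (h : m + 1 ≤ m') :
    (v m).comp ((bondingComp g (p (m + 1)) (p m') (hp.monotone h)).comp (e m')) =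
      bondingComp b (q m) (q m') (hq.monotone (by omega)) := by
  obtain ⟨M, rfl⟩ : ∃ M, m' = M + 1 := ⟨m' - 1, by omega⟩
  exact key b g q (fun s => p (s + 1)) hq (fun _ _ hl => hp (by omega)) v (fun s => e (s + 1))
    hve (fun s => hev (s + 1)) m M (by omega)

@[reducible] def kseq (p j : ℕ → ℕ) : ℕ → ℕ := fun t => Nat.rec 0 (fun _ kt => p (j kt + 1) + 1) t

theorem proIso_trans {A : ℕ → Type*} [∀ n, Group (A n)] {a : ∀ n, A (n + 1) →* A n}
    {G : ℕ → Type*} [∀ n, Group (G n)] {g : ∀ n, G (n + 1) →* G n}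
    {B : ℕ → Type*} [∀ n, Group (B n)] {b : ∀ n, B (n + 1) →* B n}
    (h1 : ProIsomorphic A a G g) (h2 : ProIsomorphic G g B b) : ProIsomorphic A a B b := by
  obtain ⟨i, j, hi, hj, d, u, hdu, hud⟩ := h1
  obtain ⟨p, q, hp, hq, e, v, hev, hve⟩ := h2
  set k : ℕ → ℕ := kseq p j with hkdef
  have hk1 : ∀ t, k (t + 1) = p (j (k t) + 1) + 1 := fun t => rfl
  have hkmono : StrictMono k := by
    apply strictMono_nat_of_lt_succ
    intro t
    have e1 : j (k t) + 1 ≤ p (j (k t) + 1) := hp.le_apply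
    have e2 : k t ≤ j (k t) := hj.le_apply
    rw [hk1]; omega
  have hjp : ∀ t, j (k t) ≤ p (j (k t)) := fun t => hp.le_apply
  have hpj : ∀ t, p (j (k t) + 1) ≤ j (p (j (k t) + 1)) := fun t => hj.le_apply
  have hkk' : ∀ t, k t ≤ p (j (k t) + 1) := by
    intro t
    have e1 : j (k t) + 1 ≤ p (j (k t) + 1) := hp.le_apply
    have e2 : k t ≤ j (k t) := hj.le_apply
    omega
  refine ⟨fun t => i (k t), fun t => q (j (k t)), hi.comp hkmono, hq.comp (hj.comp hkmono),
    fun t => (d (k t)).comp ((bondingComp g (j (k t)) (p (j (k t))) (hjp t)).comp (e (j (k t)))),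
    fun t => (v (j (k t))).comp
      ((bondingComp g (p (j (k t) + 1)) (j (p (j (k t) + 1))) (hpj t)).comp (u (p (j (k t) + 1)))),
    fun t => ?_, fun t => ?_⟩
  · -- D t ∘ U t = bondingComp a
    ext x
    simp only [MonoidHom.comp_apply]
    have hev' : ∀ y, e (j (k t)) (v (j (k t)) y) =
        bondingComp g (p (j (k t))) (p (j (k t) + 1)) (hp (Nat.lt_succ_self _)).le y :=
      fun y => DFunLike.congr_fun (hev (j (k t))) y
    rw [hev']
    have A1 : ∀ y, bondingComp g (p (j (k t))) (p (j (k t) + 1)) (hp (Nat.lt_succ_self _)).le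
        (bondingComp g (p (j (k t) + 1)) (j (p (j (k t) + 1))) (hpj t) y) =
        bondingComp g (p (j (k t))) (j (p (j (k t) + 1))) ((hp (Nat.lt_succ_self _)).le.trans (hpj t)) y :=
      fun y => DFunLike.congr_fun (bondingComp_comp g _ _ _ _ _ _) y
    rw [A1]
    have A2 : ∀ y, bondingComp g (j (k t)) (p (j (k t))) (hjp t)
        (bondingComp g (p (j (k t))) (j (p (j (k t) + 1))) ((hp (Nat.lt_succ_self _)).le.trans (hpj t)) y) =
        bondingComp g (j (k t)) (j (p (j (k t) + 1))) (hj.monotone (hkk' t)) y :=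
      fun y => DFunLike.congr_fun (bondingComp_comp g _ _ _ _ _ _) y
    rw [A2]
    exact DFunLike.congr_fun (key a g i j hi hj d u hdu hud (k t) (p (j (k t) + 1)) (hkk' t)) x
  · -- U t ∘ D (t+1) = bondingComp b
    ext x
    simp only [MonoidHom.comp_apply]
    have hud' : ∀ y, u (p (j (k t) + 1)) (d (k (t + 1)) y) =
        bondingComp g (j (p (j (k t) + 1))) (j (k (t + 1)))
          (hj (Nat.lt_succ_self (p (j (k t) + 1)))).le y :=
      fun y => DFunLike.congr_fun (hud (p (j (k t) + 1))) y
    rw [hud']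
    have B1 : ∀ y, bondingComp g (j (p (j (k t) + 1))) (j (k (t + 1)))
          (hj (Nat.lt_succ_self (p (j (k t) + 1)))).le
        (bondingComp g (j (k (t + 1))) (p (j (k (t + 1)))) (hjp (t + 1)) y) =
        bondingComp g (j (p (j (k t) + 1))) (p (j (k (t + 1))))
          ((hj (Nat.lt_succ_self (p (j (k t) + 1)))).le.trans (hjp (t + 1))) y :=
      fun y => DFunLike.congr_fun (bondingComp_comp g _ _ _ _ _ _) y
    rw [B1]
    have B2 : ∀ y, bondingComp g (p (j (k t) + 1)) (j (p (j (k t) + 1))) (hpj t)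
        (bondingComp g (j (p (j (k t) + 1))) (p (j (k (t + 1))))
          ((hj (Nat.lt_succ_self (p (j (k t) + 1)))).le.trans (hjp (t + 1))) y) =
        bondingComp g (p (j (k t) + 1)) (p (j (k (t + 1))))
          (hp.monotone (by have := hj (hkmono (show t < t + 1 by omega)); omega)) y :=
      fun y => DFunLike.congr_fun (bondingComp_comp g _ _ _ _ _ _) y
    rw [B2]
    exact DFunLike.congr_fun (key2 b g p q hp hq e v hev hve (j (k t)) (j (k (t + 1)))
      (Nat.succ_le_of_lt (hj (hkmono (Nat.lt_succ_self t))))) x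

theorem core {A : ℕ → Type u} [∀ n, Group (A n)] {B : ℕ → Type u} [∀ n, Group (B n)]
    (a : ∀ n, A (n + 1) →* A n) (b : ∀ n, B (n + 1) →* B n)
    (hsa : ∀ n, Function.Surjective (a n)) (hib : ∀ n, Function.Injective (b n))
    (h : ProIsomorphic A a B b) :
    ∃ (C : Type u) (_ : Group C),
      ProIsomorphic A a (fun _ => C) (fun _ => MonoidHom.id C) := by
  obtain ⟨i, j, hi, hj, d, u, hdu, hud⟩ := h
  have dsurj : ∀ k, Function.Surjective (d k) := by
    intro k
    have hs : Function.Surjective ((d k).comp (u k)) := by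
      rw [hdu k]; exact bondingComp_surjective a hsa _ _ _
    rw [MonoidHom.coe_comp] at hs
    exact hs.of_comp
  have dinj : ∀ k, Function.Injective (d (k + 1)) := by
    intro k
    have hs : Function.Injective ((u k).comp (d (k + 1))) := by
      rw [hud k]; exact bondingComp_injective b hib _ _ _
    rw [MonoidHom.coe_comp] at hs
    exact hs.of_comp
  have uinj : ∀ k, Function.Injective (u k) := by
    intro k
    have hs : Function.Injective ((u k).comp (d (k + 1))) := by
      rw [hud k]; exact bondingComp_injective b hib _ _ _
    rw [MonoidHom.coe_comp] at hs
    intro x y hxy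
    obtain ⟨x', rfl⟩ := dsurj (k + 1) x
    obtain ⟨y', rfl⟩ := dsurj (k + 1) y
    exact congrArg _ (hs hxy)
  have hφ : ∀ t, Function.Bijective
      (bondingComp a (i (t + 1)) (i (t + 2)) (hi (Nat.lt_succ_self (t + 1))).le) := by
    intro t
    constructor
    · rw [← hdu (t + 1), MonoidHom.coe_comp]
      exact (dinj t).comp (uinj (t + 1))
    · exact bondingComp_surjective a hsa _ _ _
  have hβ : ∀ t, Function.Bijective
      (bondingComp a (i 1) (i (t + 1)) (hi.monotone (by omega))) := by
    intro t
    induction t with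
    | zero => rw [bondingComp_self]; exact Function.bijective_id
    | succ s ih =>
        have hc : bondingComp a (i 1) (i (s + 2)) (hi.monotone (by omega)) =
            (bondingComp a (i 1) (i (s + 1)) (hi.monotone (by omega))).comp
              (bondingComp a (i (s + 1)) (i (s + 2)) (hi (Nat.lt_succ_self (s + 1))).le) :=
          (bondingComp_comp a _ _ _ _ _ _).symm
        rw [hc, MonoidHom.coe_comp]
        exact ih.comp (hφ s)
  set E : ∀ t, A (i (t + 1)) ≃* A (i 1) :=
    fun t => MulEquiv.ofBijective (bondingComp a (i 1) (i (t + 1)) (hi.monotone (by omega)))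
      (hβ t) with hE
  refine ⟨A (i 1), inferInstance, fun t => i (t + 1), fun t => t,
    fun _ _ hlt => hi (by omega), fun _ _ hlt => hlt,
    fun t => ((E t).symm : A (i 1) →* A (i (t + 1))),
    fun t => bondingComp a (i 1) (i (t + 2)) (hi.monotone (by omega)),
    fun t => ?_, fun t => ?_⟩
  · ext x
    simp only [MonoidHom.comp_apply, MulEquiv.coe_toMonoidHom]
    have hx : bondingComp a (i 1) (i (t + 2)) (hi.monotone (by omega)) x =
        E t (bondingComp a (i (t + 1)) (i (t + 2)) (hi (Nat.lt_succ_self (t + 1))).le x) :=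
      (DFunLike.congr_fun (bondingComp_comp a (i 1) (i (t + 1)) (i (t + 2))
        (hi.monotone (by omega)) (hi (Nat.lt_succ_self (t + 1))).le (hi.monotone (by omega))) x).symm
    rw [hx]; exact (E t).symm_apply_apply _
  · rw [bondingComp_const_id]
    ext c
    simp only [MonoidHom.comp_apply, MulEquiv.coe_toMonoidHom, MonoidHom.id_apply]
    exact (E (t + 1)).apply_symm_apply c

/-- An inverse sequence of groups that is both semistable and pro-monomorphic
is stable. -/
theorem stable_of_semistable_of_proMonomorphic {G : ℕ → Type u} [∀ n, Group (G n)]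
    (g : ∀ n, G (n + 1) →* G n)
    (hss : Semistable G g) (hpm : ProMonomorphic G g) :
    Stable G g := by
  obtain ⟨A, instA, a, hsa, hGA⟩ := hss
  obtain ⟨B, instB, b, hib, hGB⟩ := hpm
  obtain ⟨C, instC, hAC⟩ := core a b hsa hib (proIso_trans (proIso_symm hGA) hGB)
  exact ⟨C, instC, proIso_trans hGA hAC⟩
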